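/- For all sufficiently large natural numbers x, the number of primes between x/e and x is strictly greater than x/(3·ln x); that is, there exists x₀ such that for all natural numbers x ≥ x₀ one has π(x) − π(⌊x/e⌋) > x/(3·ln x). -/

import Mathlib

open Finset Real ArithmeticFunction

noncomputable def psiC (N : ℕ) : ℝ := ∑ n ∈ Finset.Ioc 0 N, Λ n
noncomputable def Tch (N : ℕ) : ℝ := ∑ n ∈ Finset.Ioc 0 N, Real.log n

lemma Tch_eq_sum_div (N : ℕ) : Tch N = ∑ d ∈ Finset.Ioc 0 N, (N / d : ℕ) * Λ d := by
  have h1 : ∀ n ∈ Finset.Ioc 0 N, Real.log n = ∑ d ∈ n.divisors, Λ d := by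
    intro n hn
    rw [ArithmeticFunction.vonMangoldt_sum]
  unfold Tch
  rw [Finset.sum_congr rfl h1]
  have h2 : ∀ n ∈ Finset.Ioc 0 N, n.divisors = (Finset.Ioc 0 N).filter (· ∣ n) := by
    intro n hn
    simp only [Finset.mem_Ioc] at hn
    ext d
    simp only [Nat.mem_divisors, Finset.mem_filter, Finset.mem_Ioc]
    constructor
    · rintro ⟨hd, -⟩
      exact ⟨⟨Nat.pos_of_dvd_of_pos hd hn.1, (Nat.le_of_dvd hn.1 hd).trans hn.2⟩, hd⟩
    · rintro ⟨-, hd⟩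
      exact ⟨hd, hn.1.ne'⟩
  rw [Finset.sum_congr rfl fun n hn => by rw [h2 n hn]]
  rw [Finset.sum_comm' (t' := Finset.Ioc 0 N)
    (s' := fun d => (Finset.Ioc 0 N).filter (d ∣ ·))]
  · refine Finset.sum_congr rfl fun d hd => ?_
    rw [Finset.sum_const, ← Nat.Ioc_filter_dvd_card_eq_div, nsmul_eq_mul]
  · intro n d
    simp only [Finset.mem_filter, Finset.mem_Ioc]
    tauto

lemma sum_psiC_div (N : ℕ) :
    ∑ m ∈ Finset.Ioc 0 N, psiC (N / m) = ∑ d ∈ Finset.Ioc 0 N, (N / d : ℕ) * Λ d := by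
  unfold psiC
  rw [Finset.sum_comm' (t' := Finset.Ioc 0 N) (s' := fun d => Finset.Ioc 0 (N / d))
    (f := fun _ d => (Λ d : ℝ))]
  · refine Finset.sum_congr rfl fun d hd => ?_
    rw [Finset.sum_const, nsmul_eq_mul, Nat.card_Ioc, Nat.sub_zero]
  · intro m d
    simp only [Finset.mem_Ioc]
    constructor
    · rintro ⟨⟨hm, hmN⟩, hd, hdm⟩
      have h : d * m ≤ N := (Nat.le_div_iff_mul_le hm).mp hdm
      have h' : m * d ≤ N := by rwa [mul_comm] at h
      exact ⟨⟨hm, (Nat.le_div_iff_mul_le hd).mpr h'⟩, hd,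
        le_trans (Nat.le_mul_of_pos_right d hm) h⟩
    · rintro ⟨⟨hm, hmd⟩, hd, hdN⟩
      have h : m * d ≤ N := (Nat.le_div_iff_mul_le hd).mp hmd
      have h' : d * m ≤ N := by rwa [mul_comm] at h
      exact ⟨⟨hm, le_trans (Nat.le_mul_of_pos_left m hd) h'⟩, hd,
        (Nat.le_div_iff_mul_le hm).mpr h'⟩

lemma Tch_eq_sum_psiC (N : ℕ) : Tch N = ∑ m ∈ Finset.Ioc 0 N, psiC (N / m) := by
  rw [Tch_eq_sum_div, sum_psiC_div]
noncomputable def gch (x : ℝ) : ℝ := x * Real.log x - x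

lemma Tch_bounds (N : ℕ) (hN : 1 ≤ N) :
    gch N + 1 ≤ Tch N ∧ Tch N ≤ gch N + 1 + Real.log N := by
  induction N, hN using Nat.le_induction with
  | base =>
    have : Tch 1 = Real.log 1 := by
      unfold Tch
      norm_num
    simp [this, gch]
  | succ N hN IH =>
    obtain ⟨IH1, IH2⟩ := IH
    have hstep : Tch (N + 1) = Tch N + Real.log (N + 1) := by
      unfold Tch
      rw [Finset.sum_Ioc_succ_top (Nat.zero_le _)]
      push_cast
      ring
    set x : ℝ := (N : ℝ) with hx
    have hx1 : (1 : ℝ) ≤ x := by rw [hx]; exact_mod_cast hN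
    have hx0 : (0 : ℝ) < x := by linarith
    have hL1 : x * (Real.log (x + 1) - Real.log x) ≤ 1 := by
      have h := Real.log_le_sub_one_of_pos (show (0:ℝ) < (x+1)/x by positivity)
      rw [Real.log_div (by linarith) (ne_of_gt hx0)] at h
      have : (x + 1) / x - 1 = 1 / x := by field_simp; ring
      rw [this] at h
      calc x * (Real.log (x + 1) - Real.log x) ≤ x * (1 / x) := by
            apply mul_le_mul_of_nonneg_left h (le_of_lt hx0)
        _ = 1 := by field_simp
    have hL2 : 1 ≤ (x + 1) * (Real.log (x + 1) - Real.log x) := by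
      have h := Real.log_le_sub_one_of_pos (show (0:ℝ) < x/(x+1) by positivity)
      rw [Real.log_div (ne_of_gt hx0) (by linarith)] at h
      have h2 : x / (x + 1) - 1 = -(1 / (x + 1)) := by field_simp; ring
      rw [h2] at h
      have h3 : 1 / (x + 1) ≤ Real.log (x + 1) - Real.log x := by linarith
      calc (1:ℝ) = (x + 1) * (1 / (x + 1)) := by field_simp
        _ ≤ (x + 1) * (Real.log (x + 1) - Real.log x) := by
            apply mul_le_mul_of_nonneg_left h3 (by linarith)
    have hcast : ((N : ℝ) + 1) = ((N + 1 : ℕ) : ℝ) := by push_cast; ring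
    constructor
    · rw [hstep]
      unfold gch
      rw [← hcast]
      unfold gch at IH1
      nlinarith [hL1]
    · rw [hstep]
      unfold gch
      rw [← hcast]
      unfold gch at IH2
      nlinarith [hL2, Real.log_nonneg hx1]
def cch (n : ℕ) : ℤ :=
  1 - (if 2 ∣ n then 1 else 0) - (if 3 ∣ n then 1 else 0) - (if 5 ∣ n then 1 else 0)
    + (if 30 ∣ n then 1 else 0)

def Pch (n : ℕ) : ℤ := ∑ k ∈ Finset.Ioc 0 n, cch k

lemma cch_add_30 (k : ℕ) : cch (30 + k) = cch k := by
  have e2 : 2 ∣ 30 + k ↔ 2 ∣ k := by omega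
  have e3 : 3 ∣ 30 + k ↔ 3 ∣ k := by omega
  have e5 : 5 ∣ 30 + k ↔ 5 ∣ k := by omega
  have e30 : 30 ∣ 30 + k ↔ 30 ∣ k := by omega
  unfold cch
  rw [if_congr e2 rfl rfl, if_congr e3 rfl rfl, if_congr e5 rfl rfl, if_congr e30 rfl rfl]

lemma Pch_zero : Pch 0 = 0 := by simp [Pch]

lemma Pch_succ (n : ℕ) : Pch (n + 1) = Pch n + cch (n + 1) := by
  unfold Pch
  rw [Finset.sum_Ioc_succ_top (Nat.zero_le _)]

lemma Pch_add_30 (n : ℕ) : Pch (n + 30) = Pch n := by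
  induction n with
  | zero => simp [Pch]; decide
  | succ n IH =>
    have : n + 1 + 30 = (n + 30) + 1 := by ring
    rw [this, Pch_succ, IH, Pch_succ]
    congr 1
    have : n + 30 + 1 = 30 + (n + 1) := by ring
    rw [this, cch_add_30]

lemma Pch_le_one (n : ℕ) : Pch n ≤ 1 := by
  induction n using Nat.strong_induction_on with
  | _ n IH =>
    by_cases h : n < 30
    · interval_cases n <;> decide
    · have h30 : n = (n - 30) + 30 := by omega
      rw [h30, Pch_add_30]
      exact IH (n - 30) (by omega)

lemma abel_identity (a : ℕ → ℝ) (N : ℕ) :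
    ∑ n ∈ Finset.Ioc 0 N, (cch n : ℝ) * a n
      = ∑ n ∈ Finset.Ioc 0 N, (Pch n : ℝ) * (a n - a (n + 1)) + (Pch N : ℝ) * a (N + 1) := by
  induction N with
  | zero => simp [Pch_zero]
  | succ N IH =>
    rw [Finset.sum_Ioc_succ_top (Nat.zero_le _), Finset.sum_Ioc_succ_top (Nat.zero_le _), IH,
      Pch_succ]
    push_cast
    ring

lemma telescope (a : ℕ → ℝ) (N : ℕ) :
    ∑ n ∈ Finset.Ioc 0 N, (a n - a (n + 1)) = a 1 - a (N + 1) := by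
  induction N with
  | zero => simp
  | succ N IH => rw [Finset.sum_Ioc_succ_top (Nat.zero_le _), IH]; ring

lemma sum_cch_mul_le (a : ℕ → ℝ) (N : ℕ)
    (hmono : ∀ n, 1 ≤ n → a (n + 1) ≤ a n) (hlast : a (N + 1) = 0) :
    ∑ n ∈ Finset.Ioc 0 N, (cch n : ℝ) * a n ≤ a 1 := by
  rw [abel_identity, hlast, mul_zero, add_zero]
  calc ∑ n ∈ Finset.Ioc 0 N, (Pch n : ℝ) * (a n - a (n + 1))
      ≤ ∑ n ∈ Finset.Ioc 0 N, (a n - a (n + 1)) := by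
        apply Finset.sum_le_sum
        intro n hn
        rw [Finset.mem_Ioc] at hn
        have h1 : (Pch n : ℝ) ≤ 1 := by exact_mod_cast Pch_le_one n
        have h2 : 0 ≤ a n - a (n + 1) := by linarith [hmono n hn.1]
        nlinarith
    _ = a 1 - a (N + 1) := telescope a N
    _ ≤ a 1 := by rw [hlast]; linarith
lemma Tch_div_eq (k N : ℕ) (hk : 0 < k) :
    Tch (N / k) = ∑ n ∈ (Finset.Ioc 0 N).filter (k ∣ ·), psiC (N / n) := by
  rw [Tch_eq_sum_psiC]
  refine Finset.sum_nbij' (fun m => k * m) (fun n => n / k) ?_ ?_ ?_ ?_ ?_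
  · intro m hm
    simp only [Finset.mem_Ioc] at hm
    simp only [Finset.mem_filter, Finset.mem_Ioc]
    refine ⟨⟨Nat.mul_pos hk hm.1, ?_⟩, Dvd.intro m rfl⟩
    rw [mul_comm]
    exact (Nat.le_div_iff_mul_le hk).mp hm.2
  · intro n hn
    simp only [Finset.mem_filter, Finset.mem_Ioc] at hn
    simp only [Finset.mem_Ioc]
    exact ⟨Nat.div_pos (Nat.le_of_dvd hn.1.1 hn.2) hk,
      Nat.div_le_div_right hn.1.2⟩
  · intro m hm
    exact Nat.mul_div_cancel_left m hk
  · intro n hn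
    simp only [Finset.mem_filter] at hn
    exact Nat.mul_div_cancel' hn.2
  · intro m hm
    rw [Nat.div_div_eq_div_mul]

lemma S_eq (N : ℕ) :
    Tch N - Tch (N / 2) - Tch (N / 3) - Tch (N / 5) + Tch (N / 30)
      = ∑ n ∈ Finset.Ioc 0 N, (cch n : ℝ) * psiC (N / n) := by
  rw [Tch_eq_sum_psiC, Tch_div_eq 2 N (by norm_num), Tch_div_eq 3 N (by norm_num),
    Tch_div_eq 5 N (by norm_num), Tch_div_eq 30 N (by norm_num)]
  rw [Finset.sum_filter, Finset.sum_filter, Finset.sum_filter, Finset.sum_filter,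
    ← Finset.sum_sub_distrib, ← Finset.sum_sub_distrib, ← Finset.sum_sub_distrib,
    ← Finset.sum_add_distrib]
  refine Finset.sum_congr rfl fun n hn => ?_
  unfold cch
  split_ifs <;> push_cast <;> ring

lemma psiC_mono : Monotone psiC := by
  intro M M' h
  unfold psiC
  apply Finset.sum_le_sum_of_subset_of_nonneg
  · exact Finset.Ioc_subset_Ioc le_rfl h
  · intro i _ _
    exact ArithmeticFunction.vonMangoldt_nonneg

lemma psiC_ge_S (N : ℕ) :
    Tch N - Tch (N / 2) - Tch (N / 3) - Tch (N / 5) + Tch (N / 30) ≤ psiC N := by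
  rw [S_eq]
  have h := sum_cch_mul_le (fun n => psiC (N / n)) N ?_ ?_
  · simpa using h
  · intro n hn
    exact psiC_mono (Nat.div_le_div_left (Nat.le_succ n) hn)
  · rw [Nat.div_eq_of_lt (Nat.lt_succ_self N)]
    simp [psiC]
lemma gch_mono {x y : ℝ} (hx : 1 ≤ x) (hxy : x ≤ y) : gch x ≤ gch y := by
  have hx0 : (0:ℝ) < x := by linarith
  have hy0 : (0:ℝ) < y := by linarith
  have hy1 : (1:ℝ) ≤ y := by linarith
  set u : ℝ := Real.log x with hu
  set v : ℝ := Real.log y with hv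
  have h1 : y * (v - u) ≥ y - x := by
    have h := Real.log_le_sub_one_of_pos (show (0:ℝ) < x / y by positivity)
    rw [Real.log_div hx0.ne' hy0.ne'] at h
    have e : y * (x / y - 1) = x - y := by field_simp
    nlinarith [mul_le_mul_of_nonneg_left h hy0.le]
  have h2 : y * v ≥ y - 1 := by
    have h := Real.log_le_sub_one_of_pos (show (0:ℝ) < 1 / y by positivity)
    rw [Real.log_div one_ne_zero hy0.ne', Real.log_one] at h
    have e : y * (1 / y - 1) = 1 - y := by field_simp
    nlinarith [mul_le_mul_of_nonneg_left h hy0.le]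
  have key : 0 ≤ y * (y * v - x * u - (y - x)) := by
    have hxyL : x * (y * (v - u)) ≥ x * (y - x) := mul_le_mul_of_nonneg_left h1 hx0.le
    nlinarith [mul_nonneg (sub_nonneg.mpr hxy) (sub_nonneg.mpr hx),
      mul_le_mul_of_nonneg_left h2 (sub_nonneg.mpr hxy)]
  have hE : 0 ≤ y * v - x * u - (y - x) := by
    nlinarith [key]
  unfold gch
  rw [← hu, ← hv]
  linarith

lemma gch_lip {x y : ℝ} (hy : 0 < y) (hyx : y ≤ x) : gch x - gch y ≤ (x - y) * Real.log x := by
  have hx0 : (0:ℝ) < x := by linarith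
  set u : ℝ := Real.log x with hu
  set v : ℝ := Real.log y with hv
  have h : y * (u - v) ≤ x - y := by
    have h := Real.log_le_sub_one_of_pos (show (0:ℝ) < x / y by positivity)
    rw [Real.log_div hx0.ne' hy.ne'] at h
    have e : y * (x / y - 1) = x - y := by field_simp
    nlinarith [mul_le_mul_of_nonneg_left h hy.le]
  unfold gch
  rw [← hu, ← hv]
  nlinarith

noncomputable def Ach : ℝ := (7/15) * Real.log 2 + (3/10) * Real.log 3 + (1/6) * Real.log 5

lemma gch_identity (x : ℝ) (hx : 0 < x) :
    gch x - gch (x/2) - gch (x/3) - gch (x/5) + gch (x/30) = Ach * x := by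
  have l30 : Real.log 30 = Real.log 2 + Real.log 3 + Real.log 5 := by
    rw [show (30:ℝ) = 2*3*5 by norm_num, Real.log_mul (by norm_num) (by norm_num),
      Real.log_mul (by norm_num) (by norm_num)]
  unfold gch Ach
  rw [Real.log_div hx.ne' (by norm_num), Real.log_div hx.ne' (by norm_num),
    Real.log_div hx.ne' (by norm_num), Real.log_div hx.ne' (by norm_num), l30]
  ring

lemma psiC_lower (N : ℕ) (hN : 30 ≤ N) :
    Ach * N - 4 * Real.log N - 2 ≤ psiC N := by
  have hx30 : (30:ℝ) ≤ (N:ℝ) := by exact_mod_cast hN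
  set x : ℝ := (N:ℝ) with hxdef
  have hx0 : (0:ℝ) < x := by linarith
  have hlogx : 0 ≤ Real.log x := Real.log_nonneg (by linarith)
  have hup : ∀ k : ℕ, 2 ≤ k → k ≤ 30 → Tch (N / k) ≤ gch (x / k) + 1 + Real.log x := by
    intro k hk2 hk30
    have hk0 : 0 < k := by omega
    have hNk : 1 ≤ N / k := Nat.one_le_div_iff hk0 |>.mpr (le_trans hk30 hN)
    have hcast : ((N / k : ℕ) : ℝ) ≤ x / k := by
      rw [hxdef]
      exact_mod_cast Nat.cast_div_le
    have h1 : (1:ℝ) ≤ ((N / k : ℕ) : ℝ) := by exact_mod_cast hNk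
    have hb := (Tch_bounds (N / k) hNk).2
    have hmono := gch_mono h1 hcast
    have hlog : Real.log ((N / k : ℕ) : ℝ) ≤ Real.log x := by
      apply Real.log_le_log (by linarith)
      calc ((N / k : ℕ) : ℝ) ≤ x / k := hcast
        _ ≤ x := by
            rw [div_le_iff₀ (by positivity : (0:ℝ) < (k:ℝ))]
            nlinarith [show (1:ℝ) ≤ (k:ℝ) by exact_mod_cast hk0]
    linarith
  have h30lo : gch (x / 30) - Real.log x ≤ Tch (N / 30) := by
    have hNk : 1 ≤ N / 30 := Nat.one_le_div_iff (by norm_num) |>.mpr hN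
    have h1 : (1:ℝ) ≤ ((N / 30 : ℕ) : ℝ) := by exact_mod_cast hNk
    have hcast : ((N / 30 : ℕ) : ℝ) ≤ x / 30 := by
      rw [hxdef]; exact_mod_cast Nat.cast_div_le
    have hfloor : x / 30 - 1 ≤ ((N / 30 : ℕ) : ℝ) := by
      have : N < 30 * (N / 30) + 30 := by omega
      have hc : x < 30 * ((N / 30 : ℕ) : ℝ) + 30 := by
        rw [hxdef]; exact_mod_cast this
      linarith
    have hlip := gch_lip (show (0:ℝ) < ((N / 30 : ℕ) : ℝ) by linarith) hcast
    have hlogx30 : Real.log (x / 30) ≤ Real.log x := by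
      apply Real.log_le_log (by positivity)
      linarith [div_le_self (by linarith : (0:ℝ) ≤ x) (by norm_num : (1:ℝ) ≤ 30)]
    have hlog30nn : 0 ≤ Real.log (x / 30) :=
      Real.log_nonneg (by rw [le_div_iff₀ (by norm_num : (0:ℝ) < 30)]; linarith)
    have hb := (Tch_bounds (N / 30) hNk).1
    have : gch (x / 30) - gch ((N / 30 : ℕ) : ℝ) ≤ Real.log x := by
      calc gch (x / 30) - gch ((N / 30 : ℕ) : ℝ)
          ≤ (x / 30 - ((N / 30 : ℕ) : ℝ)) * Real.log (x / 30) := hlip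
        _ ≤ 1 * Real.log (x / 30) := by
            apply mul_le_mul_of_nonneg_right _ hlog30nn
            linarith
        _ ≤ Real.log x := by linarith
    linarith
  have hS := psiC_ge_S N
  have hTlo := (Tch_bounds N (by omega)).1
  have h2 := hup 2 (by norm_num) (by norm_num)
  have h3 := hup 3 (by norm_num) (by norm_num)
  have h5 := hup 5 (by norm_num) (by norm_num)
  have hid := gch_identity x hx0
  linarith
noncomputable def thC (N : ℕ) : ℝ := ∑ p ∈ (Finset.Ioc 0 N).filter Nat.Prime, Real.log p

lemma thC_eq_log_primorial (N : ℕ) : thC N = Real.log (primorial N : ℝ) := by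
  unfold thC primorial
  have hset : (Finset.Ioc 0 N).filter Nat.Prime
      = (Finset.range (N + 1)).filter Nat.Prime := by
    ext p
    simp only [Finset.mem_filter, Finset.mem_Ioc, Finset.mem_range]
    constructor
    · rintro ⟨⟨h0, hN⟩, hp⟩; exact ⟨by omega, hp⟩
    · rintro ⟨hN, hp⟩; exact ⟨⟨hp.pos, by omega⟩, hp⟩
  rw [hset]
  push_cast
  rw [Real.log_prod]
  intro p hp
  simp only [Finset.mem_filter] at hp
  exact_mod_cast hp.2.pos.ne'

lemma thC_le (N : ℕ) : thC N ≤ N * Real.log 4 := by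
  rw [thC_eq_log_primorial]
  calc Real.log (primorial N : ℝ) ≤ Real.log ((4 : ℝ) ^ N) := by
        apply Real.log_le_log (by exact_mod_cast primorial_pos N)
        exact_mod_cast primorial_le_4_pow N
    _ = N * Real.log 4 := by rw [Real.log_pow]

lemma thC_nonneg (N : ℕ) : 0 ≤ thC N := by
  apply Finset.sum_nonneg
  intro p hp
  simp only [Finset.mem_filter] at hp
  exact Real.log_nonneg (by exact_mod_cast hp.2.one_lt.le)

lemma psiC_le_thC_add (N : ℕ) :
    psiC N ≤ thC N + ((N.sqrt + 1) * (Nat.log 2 N + 1) : ℕ) * Real.log N := by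
  unfold psiC
  rw [← Finset.sum_filter_add_sum_filter_not (Finset.Ioc 0 N) Nat.Prime]
  have h1 : ∑ p ∈ (Finset.Ioc 0 N).filter Nat.Prime, Λ p = thC N := by
    unfold thC
    refine Finset.sum_congr rfl fun p hp => ?_
    simp only [Finset.mem_filter] at hp
    exact ArithmeticFunction.vonMangoldt_apply_prime hp.2
  rw [h1]
  refine (add_le_add_iff_left (thC N)).mpr ?_
  set t : Finset ℕ := (Finset.Ioc 0 N).filter (fun n => ¬ Nat.Prime n) with ht
  have h2 : ∑ n ∈ t, Λ n = ∑ n ∈ t.filter IsPrimePow, Λ n := by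
    refine (Finset.sum_filter_of_ne ?_).symm
    intro n _ hn
    exact ArithmeticFunction.vonMangoldt_ne_zero_iff.mp hn
  rw [h2]
  have h3 : ∑ n ∈ t.filter IsPrimePow, Λ n
      ≤ (t.filter IsPrimePow).card * Real.log N := by
    rw [← nsmul_eq_mul]
    apply Finset.sum_le_card_nsmul
    intro n hn
    simp only [ht, Finset.mem_filter, Finset.mem_Ioc] at hn
    calc Λ n ≤ Real.log n := ArithmeticFunction.vonMangoldt_le_log
      _ ≤ Real.log N := Real.log_le_log (by exact_mod_cast hn.1.1.1) (by exact_mod_cast hn.1.1.2)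
  refine le_trans h3 ?_
  have hlogN : 0 ≤ Real.log N := by
    rcases Nat.eq_zero_or_pos N with h | h
    · simp [h]
    · exact Real.log_nonneg (by exact_mod_cast h)
  apply mul_le_mul_of_nonneg_right _ hlogN
  have hcard : (t.filter IsPrimePow).card ≤ (N.sqrt + 1) * (Nat.log 2 N + 1) := by
    have : (t.filter IsPrimePow).card
        ≤ ((Finset.range (N.sqrt + 1)) ×ˢ (Finset.range (Nat.log 2 N + 1))).card := by
      apply Finset.card_le_card_of_injOn (fun n => (n.minFac, n.factorization n.minFac))
      · intro n hn
        simp only [ht, Finset.mem_coe, Finset.mem_filter, Finset.mem_Ioc] at hn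
        obtain ⟨⟨⟨hn0, hnN⟩, hnp⟩, hpp⟩ := hn
        have hne1 : n ≠ 1 := hpp.ne_one
        have hp : (n.minFac).Prime := Nat.minFac_prime hne1
        have heq : n.minFac ^ n.factorization n.minFac = n :=
          hpp.minFac_pow_factorization_eq
        set p := n.minFac
        set k := n.factorization p
        have hk2 : 2 ≤ k := by
          by_contra h
          interval_cases k
          · rw [pow_zero] at heq; exact hne1 heq.symm
          · rw [pow_one] at heq; exact hnp (heq ▸ hp)
        have hppN : p * p ≤ N := by
          calc p * p = p ^ 2 := (sq p).symm
            _ ≤ p ^ k := Nat.pow_le_pow_right hp.pos hk2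
            _ = n := heq
            _ ≤ N := hnN
        have h2k : 2 ^ k ≤ N := by
          calc 2 ^ k ≤ p ^ k := Nat.pow_le_pow_left hp.two_le k
            _ = n := heq
            _ ≤ N := hnN
        simp only [Finset.mem_coe, Finset.mem_product, Finset.mem_range]
        constructor
        · have : p ≤ N.sqrt := Nat.le_sqrt.mpr hppN
          omega
        · have := (Nat.le_log_iff_pow_le one_lt_two (by omega : N ≠ 0)).mpr h2k
          exact Nat.lt_succ_of_le this
      · intro n hn m hm hnm
        simp only [ht, Finset.coe_filter, Set.mem_setOf_eq] at hn hm
        have h1 := hn.2.minFac_pow_factorization_eq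
        have h2 := hm.2.minFac_pow_factorization_eq
        rw [Prod.mk.injEq] at hnm
        rw [← h1, ← h2, hnm.2, hnm.1]
    simpa using this
  exact_mod_cast hcard
lemma primeCounting_eq_card (N : ℕ) :
    Nat.primeCounting N = ((Finset.Ioc 0 N).filter Nat.Prime).card := by
  have h1 : Nat.primeCounting N = ((N + 1).primesBelow).card :=
    (Nat.primesBelow_card_eq_primeCounting' (N + 1)).symm
  rw [h1, Nat.primesBelow]
  congr 1
  ext p
  simp only [Finset.mem_filter, Finset.mem_Ioc, Finset.mem_range]
  constructor
  · rintro ⟨hN, hp⟩; exact ⟨⟨hp.pos, by omega⟩, hp⟩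
  · rintro ⟨⟨h0, hN⟩, hp⟩; exact ⟨by omega, hp⟩

lemma primeCounting_split (M N : ℕ) (h : M ≤ N) :
    Nat.primeCounting N
      = Nat.primeCounting M + ((Finset.Ioc M N).filter Nat.Prime).card := by
  rw [primeCounting_eq_card, primeCounting_eq_card,
    ← Finset.Ioc_union_Ioc_eq_Ioc (Nat.zero_le M) h, Finset.filter_union,
    Finset.card_union_of_disjoint]
  apply Finset.disjoint_filter_filter
  rw [Finset.disjoint_left]
  intro a ha hb
  simp only [Finset.mem_Ioc] at ha hb
  omega

lemma thC_diff_le (M N : ℕ) (h : M ≤ N) :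
    thC N - thC M ≤ (((Finset.Ioc M N).filter Nat.Prime).card : ℝ) * Real.log N := by
  have hsplit : thC N = thC M + ∑ p ∈ (Finset.Ioc M N).filter Nat.Prime, Real.log p := by
    unfold thC
    rw [← Finset.Ioc_union_Ioc_eq_Ioc (Nat.zero_le M) h, Finset.filter_union,
      Finset.sum_union]
    apply Finset.disjoint_filter_filter
    rw [Finset.disjoint_left]
    intro a ha hb
    simp only [Finset.mem_Ioc] at ha hb
    omega
  rw [hsplit]
  have : ∑ p ∈ (Finset.Ioc M N).filter Nat.Prime, Real.log p
      ≤ (((Finset.Ioc M N).filter Nat.Prime).card : ℝ) * Real.log N := by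
    rw [← nsmul_eq_mul]
    apply Finset.sum_le_card_nsmul
    intro p hp
    simp only [Finset.mem_filter, Finset.mem_Ioc] at hp
    exact Real.log_le_log (by exact_mod_cast hp.2.pos) (by exact_mod_cast hp.1.2)
  linarith
lemma Ach_ge : (0.9208 : ℝ) ≤ Ach := by
  have l2 : (0.6931471803 : ℝ) < Real.log 2 := Real.log_two_gt_d9
  have l3 : (19/12 : ℝ) * Real.log 2 ≤ Real.log 3 := by
    have h : Real.log ((2:ℝ)^(19:ℕ)) ≤ Real.log ((3:ℝ)^(12:ℕ)) :=
      Real.log_le_log (by positivity) (by norm_num)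
    rw [Real.log_pow, Real.log_pow] at h
    push_cast at h
    linarith
  have l5 : (65/28 : ℝ) * Real.log 2 ≤ Real.log 5 := by
    have h : Real.log ((2:ℝ)^(65:ℕ)) ≤ Real.log ((5:ℝ)^(28:ℕ)) :=
      Real.log_le_log (by positivity) (by norm_num)
    rw [Real.log_pow, Real.log_pow] at h
    push_cast at h
    linarith
  unfold Ach
  nlinarith

lemma ev_sq_log : ∀ᶠ x : ℝ in Filter.atTop, (Real.log x)^2 ≤ 0.001 * Real.sqrt x := by
  have h := (isLittleO_log_rpow_rpow_atTop (2:ℝ)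
    (by norm_num : (0:ℝ) < 1/2)).bound (by norm_num : (0:ℝ) < 0.001)
  filter_upwards [h, Filter.eventually_ge_atTop (1:ℝ)] with x hx hx1
  rw [Real.norm_eq_abs, Real.norm_eq_abs] at hx
  have hlog0 : 0 ≤ Real.log x := Real.log_nonneg hx1
  have e1 : Real.log x ^ (2:ℝ) = (Real.log x)^2 := by
    rw [show (2:ℝ) = ((2:ℕ):ℝ) by norm_num, Real.rpow_natCast]
  have e2 : x ^ (1/2:ℝ) = Real.sqrt x := (Real.sqrt_eq_rpow x).symm
  rw [e1, e2, abs_of_nonneg (by positivity), abs_of_nonneg (Real.sqrt_nonneg x)] at hx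
  exact hx

lemma ev_log_lin : ∀ᶠ x : ℝ in Filter.atTop, 4 * Real.log x + 2 ≤ 0.002 * x := by
  have h := Real.isLittleO_log_id_atTop.bound (by norm_num : (0:ℝ) < 0.0004)
  filter_upwards [h, Filter.eventually_ge_atTop (5000:ℝ)] with x hx hx5
  rw [Real.norm_eq_abs, Real.norm_eq_abs, _root_.id] at hx
  have hlog0 : 0 ≤ Real.log x := Real.log_nonneg (by linarith)
  rw [abs_of_nonneg hlog0, abs_of_nonneg (by linarith : (0:ℝ) ≤ x)] at hx
  linarith

lemma eventual_err : ∀ᶠ N : ℕ in Filter.atTop,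
    (((N.sqrt + 1) * (Nat.log 2 N + 1) : ℕ) : ℝ) * Real.log N
      + 4 * Real.log N + 2 ≤ 0.01 * N := by
  have hcast : Filter.Tendsto (fun N : ℕ => (N : ℝ)) Filter.atTop Filter.atTop :=
    tendsto_natCast_atTop_atTop
  filter_upwards [hcast.eventually ev_sq_log, hcast.eventually ev_log_lin,
    Filter.eventually_ge_atTop 9] with N h1 h2 hN9
  have hN1 : (1:ℝ) ≤ (N:ℝ) := by exact_mod_cast Nat.one_le_iff_ne_zero.mpr (by omega)
  have hlogN : (1:ℝ) ≤ Real.log N := by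
    rw [show (1:ℝ) = Real.log (Real.exp 1) by rw [Real.log_exp]]
    apply Real.log_le_log (Real.exp_pos 1)
    have := Real.exp_one_lt_d9
    have : (N:ℝ) ≥ 9 := by exact_mod_cast hN9
    nlinarith [Real.exp_one_lt_d9]
  have hsqrt1 : (1:ℝ) ≤ Real.sqrt N := by
    rw [show (1:ℝ) = Real.sqrt 1 by simp]
    exact Real.sqrt_le_sqrt hN1
  have hs : ((N.sqrt : ℕ) : ℝ) ≤ Real.sqrt N := Real.nat_sqrt_le_real_sqrt
  have hl : ((Nat.log 2 N : ℕ) : ℝ) ≤ Real.log N / Real.log 2 := by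
    have := Real.natLog_le_logb N 2
    rwa [Real.logb] at this
  have hlog2 : (0.5:ℝ) ≤ Real.log 2 := by linarith [Real.log_two_gt_d9]
  have hl2 : ((Nat.log 2 N : ℕ) : ℝ) ≤ 2 * Real.log N := by
    have hd : Real.log N / Real.log 2 ≤ 2 * Real.log N := by
      rw [div_le_iff₀ (by linarith : (0:ℝ) < Real.log 2)]
      nlinarith
    linarith
  have hfac : (((N.sqrt + 1) * (Nat.log 2 N + 1) : ℕ) : ℝ)
      ≤ (2 * Real.sqrt N) * (3 * Real.log N) := by
    push_cast
    have ha : ((N.sqrt : ℕ) : ℝ) + 1 ≤ 2 * Real.sqrt N := by linarith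
    have hb : ((Nat.log 2 N : ℕ) : ℝ) + 1 ≤ 3 * Real.log N := by linarith
    have h0a : (0:ℝ) ≤ ((N.sqrt : ℕ) : ℝ) + 1 := by positivity
    exact mul_le_mul ha hb (by positivity) (by positivity)
  have hmain : (((N.sqrt + 1) * (Nat.log 2 N + 1) : ℕ) : ℝ) * Real.log N
      ≤ 6 * Real.sqrt N * (Real.log N)^2 := by
    have := mul_le_mul_of_nonneg_right hfac (by linarith : (0:ℝ) ≤ Real.log N)
    nlinarith
  have hsq : Real.sqrt N * Real.sqrt N = (N:ℝ) := Real.mul_self_sqrt (by linarith)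
  have h6 : 6 * Real.sqrt N * (Real.log N)^2 ≤ 0.006 * N := by
    have := mul_le_mul_of_nonneg_left h1 (by positivity : (0:ℝ) ≤ 6 * Real.sqrt N)
    nlinarith
  linarith

lemma eventual_theta : ∀ᶠ N : ℕ in Filter.atTop, 0.9108 * (N:ℝ) ≤ thC N := by
  filter_upwards [eventual_err, Filter.eventually_ge_atTop 30] with N herr h30
  have h1 := psiC_lower N h30
  have h2 := psiC_le_thC_add N
  have hA := Ach_ge
  have hN0 : (0:ℝ) ≤ (N:ℝ) := by positivity
  nlinarith
/-- For all sufficiently large natural numbers `x`, the number of primes between `x/e`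
and `x` is strictly greater than `x / (3 * ln x)`. -/
theorem primes_between_div_e_lower_bound :
    ∃ x₀ : ℕ, ∀ x : ℕ, x ≥ x₀ →
      ((Nat.primeCounting x : ℝ) - (Nat.primeCounting ⌊(x : ℝ) / Real.exp 1⌋₊ : ℝ))
        > (x : ℝ) / (3 * Real.log x) := by
  obtain ⟨n₀, hn₀⟩ := Filter.eventually_atTop.mp eventual_theta
  refine ⟨max n₀ 3, fun N hN => ?_⟩
  have hN3 : 3 ≤ N := le_trans (le_max_right n₀ 3) hN
  have hth : 0.9108 * (N:ℝ) ≤ thC N := hn₀ N (le_trans (le_max_left n₀ 3) hN)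
  have hNr : (3:ℝ) ≤ (N:ℝ) := by exact_mod_cast hN3
  have hN0 : (0:ℝ) < (N:ℝ) := by linarith
  set M : ℕ := ⌊(N : ℝ) / Real.exp 1⌋₊ with hMdef
  have hexp : (2.7182818283 : ℝ) < Real.exp 1 := Real.exp_one_gt_d9
  have hMr : (M:ℝ) ≤ (N:ℝ) / Real.exp 1 := Nat.floor_le (by positivity)
  have hMN : M ≤ N := by
    have : (M:ℝ) ≤ (N:ℝ) := le_trans hMr (by
      rw [div_le_iff₀ (by positivity)]
      nlinarith)
    exact_mod_cast this
  have hlog4 : Real.log 4 < 1.3862943616 := by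
    have : Real.log 4 = 2 * Real.log 2 := by
      rw [show (4:ℝ) = 2^(2:ℕ) by norm_num, Real.log_pow]
      push_cast; ring
    rw [this]
    linarith [Real.log_two_lt_d9]
  have hlog4nn : 0 ≤ Real.log 4 := Real.log_nonneg (by norm_num)
  have hthM : thC M ≤ 0.51 * (N:ℝ) := by
    have h1 : thC M ≤ (M:ℝ) * Real.log 4 := thC_le M
    have h2 : (M:ℝ) * Real.log 4 ≤ ((N:ℝ) / Real.exp 1) * Real.log 4 :=
      mul_le_mul_of_nonneg_right hMr hlog4nn
    have h3 : ((N:ℝ) / Real.exp 1) * Real.log 4 ≤ 0.51 * (N:ℝ) := by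
      rw [div_mul_eq_mul_div, div_le_iff₀ (Real.exp_pos 1)]
      nlinarith
    linarith
  set card : ℕ := ((Finset.Ioc M N).filter Nat.Prime).card with hcdef
  have hsplit : Nat.primeCounting N = Nat.primeCounting M + card :=
    primeCounting_split M N hMN
  have hdiff : thC N - thC M ≤ (card : ℝ) * Real.log N := thC_diff_le M N hMN
  have hcard : 0.4 * (N:ℝ) ≤ (card:ℝ) * Real.log N := by linarith
  have hlogN : 0 < Real.log N := Real.log_pos (by linarith)
  have hgoal : (N:ℝ) / (3 * Real.log N) < (card:ℝ) := by
    rw [div_lt_iff₀ (by positivity)]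
    nlinarith
  have hcast : (Nat.primeCounting N : ℝ) = (Nat.primeCounting M : ℝ) + (card:ℝ) := by
    exact_mod_cast hsplit
  rw [hcast]
  linarith
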